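/- Consider 2l×2l matrices over 𝔽_q indexed by {1,…,l,−1,…,−l}. For each 1 ≤ i ≤ l, the matrix w_i := I − e_{i,i} − e_{−i,−i} − e_{i,−i} − e_{−i,i} lies in the subgroup of GL(2l,𝔽_q) generated by the D_l Chevalley generators together with w_l; moreover w_i satisfies ᵀw_i·β·w_i = β for β = [[0,I_l],[I_l,0]] (so w_i ∈ O(2l,q)), and for every 2l×2l matrix g the i-th row of w_i·g equals the negative of the (−i)-th row of g and the (−i)-th row of w_i·g equals the negative of the i-th row of g. -/

import Mathlib

open Matrix

/-- The `D_l` Chevalley generators, as a set of invertible `2l × 2l` matrices.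
Index `Sum.inl i` plays the role of `i ∈ {1,…,l}` and `Sum.inr i` of `-i`. -/
def DlGens (K : Type*) [Field K] (l : ℕ) :
    Set (Matrix (Fin l ⊕ Fin l) (Fin l ⊕ Fin l) K)ˣ :=
  {u | ∃ t : K,
    (∃ i j : Fin l, i ≠ j ∧ (u : Matrix (Fin l ⊕ Fin l) (Fin l ⊕ Fin l) K) =
      1 + t • (single (Sum.inl i) (Sum.inl j) (1 : K)
        - single (Sum.inr j) (Sum.inr i) (1 : K))) ∨
    (∃ i j : Fin l, i < j ∧ (u : Matrix (Fin l ⊕ Fin l) (Fin l ⊕ Fin l) K) =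
      1 + t • (single (Sum.inl i) (Sum.inr j) (1 : K)
        - single (Sum.inl j) (Sum.inr i) (1 : K))) ∨
    (∃ i j : Fin l, i < j ∧ (u : Matrix (Fin l ⊕ Fin l) (Fin l ⊕ Fin l) K) =
      1 + t • (single (Sum.inr i) (Sum.inl j) (1 : K)
        - single (Sum.inr j) (Sum.inl i) (1 : K)))}

section Helpers

variable {K : Type*} [Field K] {l : ℕ}

private lemma transpose_E (a b : Fin l ⊕ Fin l) (c : K) :
    (single a b c)ᵀ = single b a c := by
  ext x y
  simp [single, transpose_apply, and_comm]

private lemma E_mul_beta_inl (a : Fin l ⊕ Fin l) (b : Fin l) :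
    single a (Sum.inl b) (1 : K) *
      (fromBlocks 0 1 1 0 : Matrix (Fin l ⊕ Fin l) (Fin l ⊕ Fin l) K) =
    single a (Sum.inr b) 1 := by
  ext x y
  rcases eq_or_ne x a with rfl | h
  · rw [single_mul_apply_same, one_mul]
    rcases y with q | q <;>
      simp [single, Matrix.one_apply] <;> split_ifs <;> simp_all
  · rw [single_mul_apply_of_ne (h := h)]
    exact (single_apply_of_row_ne (Ne.symm h) _ _ _).symm

private lemma E_mul_beta_inr (a : Fin l ⊕ Fin l) (b : Fin l) :
    single a (Sum.inr b) (1 : K) *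
      (fromBlocks 0 1 1 0 : Matrix (Fin l ⊕ Fin l) (Fin l ⊕ Fin l) K) =
    single a (Sum.inl b) 1 := by
  ext x y
  rcases eq_or_ne x a with rfl | h
  · rw [single_mul_apply_same, one_mul]
    rcases y with q | q <;>
      simp [single, Matrix.one_apply] <;> split_ifs <;> simp_all
  · rw [single_mul_apply_of_ne (h := h)]
    exact (single_apply_of_row_ne (Ne.symm h) _ _ _).symm

private lemma beta_mul_E_inl (a : Fin l) (b : Fin l ⊕ Fin l) :
    (fromBlocks 0 1 1 0 : Matrix (Fin l ⊕ Fin l) (Fin l ⊕ Fin l) K) *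
      single (Sum.inl a) b (1 : K) =
    single (Sum.inr a) b 1 := by
  ext x y
  rcases eq_or_ne y b with rfl | h
  · rw [mul_single_apply_same, mul_one]
    rcases x with q | q <;>
      simp [single, Matrix.one_apply] <;> split_ifs <;> simp_all
  · rw [mul_single_apply_of_ne (hbj := h)]
    exact (single_apply_of_col_ne _ _ (Ne.symm h) _).symm

private lemma beta_mul_E_inr (a : Fin l) (b : Fin l ⊕ Fin l) :
    (fromBlocks 0 1 1 0 : Matrix (Fin l ⊕ Fin l) (Fin l ⊕ Fin l) K) *
      single (Sum.inr a) b (1 : K) =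
    single (Sum.inl a) b 1 := by
  ext x y
  rcases eq_or_ne y b with rfl | h
  · rw [mul_single_apply_same, mul_one]
    rcases x with q | q <;>
      simp [single, Matrix.one_apply] <;> split_ifs <;> simp_all
  · rw [mul_single_apply_of_ne (hbj := h)]
    exact (single_apply_of_col_ne _ _ (Ne.symm h) _).symm

end Helpers

/-- the elements `w_i = I - e_{i,i} - e_{-i,-i} - e_{i,-i} - e_{-i,i}`
lie in the subgroup generated by the `D_l` Chevalley generators together with
`w_l`; they are orthogonal, and `w_i·g` swaps the `i`-th and `(-i)`-th rows of
`g` with a sign change. -/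
theorem stmt_7 (K : Type*) [Field K] [Fintype K] (hchar : ringChar K ≠ 2)
    (l : ℕ) (hl : 2 ≤ l) (i : Fin l)
    (wi wl β : Matrix (Fin l ⊕ Fin l) (Fin l ⊕ Fin l) K)
    (hwi : wi = 1 - single (Sum.inl i) (Sum.inl i) (1 : K)
        - single (Sum.inr i) (Sum.inr i) (1 : K)
        - single (Sum.inl i) (Sum.inr i) (1 : K)
        - single (Sum.inr i) (Sum.inl i) (1 : K))
    (hwl : wl = 1 - single (Sum.inl (⟨l - 1, by omega⟩ : Fin l))
          (Sum.inl (⟨l - 1, by omega⟩ : Fin l)) (1 : K)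
        - single (Sum.inr (⟨l - 1, by omega⟩ : Fin l))
          (Sum.inr (⟨l - 1, by omega⟩ : Fin l)) (1 : K)
        - single (Sum.inl (⟨l - 1, by omega⟩ : Fin l))
          (Sum.inr (⟨l - 1, by omega⟩ : Fin l)) (1 : K)
        - single (Sum.inr (⟨l - 1, by omega⟩ : Fin l))
          (Sum.inl (⟨l - 1, by omega⟩ : Fin l)) (1 : K))
    (hβ : β = fromBlocks 0 1 1 0) :
    (∃ u ∈ Subgroup.closure (DlGens K l ∪
        {v : (Matrix (Fin l ⊕ Fin l) (Fin l ⊕ Fin l) K)ˣ |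
          (v : Matrix (Fin l ⊕ Fin l) (Fin l ⊕ Fin l) K) = wl}),
      (u : Matrix (Fin l ⊕ Fin l) (Fin l ⊕ Fin l) K) = wi) ∧
    wiᵀ * β * wi = β ∧
    ∀ g : Matrix (Fin l ⊕ Fin l) (Fin l ⊕ Fin l) K,
      (∀ j, (wi * g) (Sum.inl i) j = -(g (Sum.inr i) j)) ∧
      (∀ j, (wi * g) (Sum.inr i) j = -(g (Sum.inl i) j)) := by
  have hlt : l - 1 < l := by omega
  set j0 : Fin l := ⟨l - 1, hlt⟩ with hj0def
  -- `wl * wl = 1`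
  have hwl2 : wl * wl = 1 := by
    rw [hwl]
    simp only [sub_mul, mul_sub, one_mul, mul_one, single_mul_single_same,
      single_mul_single_of_ne, ne_eq, reduceCtorEq, not_false_eq_true]
    abel
  refine ⟨?_, ?_, ?_⟩
  · -- membership in the closure
    by_cases hij : i = j0
    · refine ⟨Units.mk wl wl hwl2 hwl2, Subgroup.subset_closure
        (Set.mem_union_right _ rfl), ?_⟩
      show wl = wi
      rw [hwi, hwl, hij]
    · -- i ≠ j0 : conjugate wl by the monomial element built from two A-type generators
      set A : Matrix (Fin l ⊕ Fin l) (Fin l ⊕ Fin l) K := single (Sum.inl i) (Sum.inl j0) (1 : K) with hA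
      set B : Matrix (Fin l ⊕ Fin l) (Fin l ⊕ Fin l) K := single (Sum.inr j0) (Sum.inr i) (1 : K) with hB
      set C : Matrix (Fin l ⊕ Fin l) (Fin l ⊕ Fin l) K := single (Sum.inl j0) (Sum.inl i) (1 : K) with hC
      set D : Matrix (Fin l ⊕ Fin l) (Fin l ⊕ Fin l) K := single (Sum.inr i) (Sum.inr j0) (1 : K) with hD
      have hji : j0 ≠ i := Ne.symm hij
      have hinva : (1 + (A - B)) * (1 - (A - B)) = 1 := by
        rw [hA, hB]
        simp only [add_mul, sub_mul, mul_sub, mul_add, one_mul, mul_one,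
          single_mul_single_same, single_mul_single_of_ne, ne_eq, reduceCtorEq,
          zero_mul, mul_zero, add_zero, zero_add, sub_zero, zero_sub,
          neg_mul, mul_neg, neg_zero, neg_neg,
          not_false_eq_true, Sum.inl.injEq, Sum.inr.injEq, hij, hji]
        abel
      have hinva' : (1 - (A - B)) * (1 + (A - B)) = 1 := by
        rw [hA, hB]
        simp only [add_mul, sub_mul, mul_sub, mul_add, one_mul, mul_one,
          single_mul_single_same, single_mul_single_of_ne, ne_eq, reduceCtorEq,
          zero_mul, mul_zero, add_zero, zero_add, sub_zero, zero_sub,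
          neg_mul, mul_neg, neg_zero, neg_neg,
          not_false_eq_true, Sum.inl.injEq, Sum.inr.injEq, hij, hji]
        abel
      have hinvb : (1 - (C - D)) * (1 + (C - D)) = 1 := by
        rw [hC, hD]
        simp only [add_mul, sub_mul, mul_sub, mul_add, one_mul, mul_one,
          single_mul_single_same, single_mul_single_of_ne, ne_eq, reduceCtorEq,
          zero_mul, mul_zero, add_zero, zero_add, sub_zero, zero_sub,
          neg_mul, mul_neg, neg_zero, neg_neg,
          not_false_eq_true, Sum.inl.injEq, Sum.inr.injEq, hij, hji]
        abel
      have hinvb' : (1 + (C - D)) * (1 - (C - D)) = 1 := by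
        rw [hC, hD]
        simp only [add_mul, sub_mul, mul_sub, mul_add, one_mul, mul_one,
          single_mul_single_same, single_mul_single_of_ne, ne_eq, reduceCtorEq,
          zero_mul, mul_zero, add_zero, zero_add, sub_zero, zero_sub,
          neg_mul, mul_neg, neg_zero, neg_neg,
          not_false_eq_true, Sum.inl.injEq, Sum.inr.injEq, hij, hji]
        abel
      set ua : (Matrix (Fin l ⊕ Fin l) (Fin l ⊕ Fin l) K)ˣ :=
        Units.mk (1 + (A - B)) (1 - (A - B)) hinva hinva' with hua
      set ub : (Matrix (Fin l ⊕ Fin l) (Fin l ⊕ Fin l) K)ˣ :=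
        Units.mk (1 - (C - D)) (1 + (C - D)) hinvb hinvb' with hub
      set uw : (Matrix (Fin l ⊕ Fin l) (Fin l ⊕ Fin l) K)ˣ :=
        Units.mk wl wl hwl2 hwl2 with huw
      have hua_mem : ua ∈ DlGens K l := by
        refine ⟨1, Or.inl ⟨i, j0, hij, ?_⟩⟩
        rw [one_smul]
      have hub_mem : ub ∈ DlGens K l := by
        refine ⟨-1, Or.inl ⟨j0, i, hji, ?_⟩⟩
        rw [neg_one_smul, ← sub_eq_add_neg]
      set S := (DlGens K l ∪
        {v : (Matrix (Fin l ⊕ Fin l) (Fin l ⊕ Fin l) K)ˣ |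
          (v : Matrix (Fin l ⊕ Fin l) (Fin l ⊕ Fin l) K) = wl}) with hS
      have ha : ua ∈ Subgroup.closure S := Subgroup.subset_closure (Or.inl hua_mem)
      have hb : ub ∈ Subgroup.closure S := Subgroup.subset_closure (Or.inl hub_mem)
      have hw : uw ∈ Subgroup.closure S := Subgroup.subset_closure (Or.inr rfl)
      refine ⟨ua * ub * ua * uw * ua⁻¹ * ub⁻¹ * ua⁻¹,
        mul_mem (mul_mem (mul_mem (mul_mem (mul_mem (mul_mem ha hb) ha) hw)
          (inv_mem ha)) (inv_mem hb)) (inv_mem ha), ?_⟩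
      have hval : ((ua * ub * ua * uw * ua⁻¹ * ub⁻¹ * ua⁻¹ :
          (Matrix (Fin l ⊕ Fin l) (Fin l ⊕ Fin l) K)ˣ) :
          Matrix (Fin l ⊕ Fin l) (Fin l ⊕ Fin l) K) =
        (1 + (A - B)) * (1 - (C - D)) * (1 + (A - B)) * wl * (1 - (A - B)) *
          (1 + (C - D)) * (1 - (A - B)) := rfl
      rw [hval, hwi]
      -- abbreviations for the other standard basis matrices that show up
      set P : Matrix (Fin l ⊕ Fin l) (Fin l ⊕ Fin l) K := single (Sum.inl i) (Sum.inl i) (1 : K) with hP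
      set Q : Matrix (Fin l ⊕ Fin l) (Fin l ⊕ Fin l) K := single (Sum.inr i) (Sum.inr i) (1 : K) with hQ
      set R : Matrix (Fin l ⊕ Fin l) (Fin l ⊕ Fin l) K := single (Sum.inl i) (Sum.inr i) (1 : K) with hR
      set T : Matrix (Fin l ⊕ Fin l) (Fin l ⊕ Fin l) K := single (Sum.inr i) (Sum.inl i) (1 : K) with hT
      set P' : Matrix (Fin l ⊕ Fin l) (Fin l ⊕ Fin l) K := single (Sum.inl j0) (Sum.inl j0) (1 : K) with hP'
      set Q' : Matrix (Fin l ⊕ Fin l) (Fin l ⊕ Fin l) K := single (Sum.inr j0) (Sum.inr j0) (1 : K) with hQ'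
      set F : Matrix (Fin l ⊕ Fin l) (Fin l ⊕ Fin l) K := single (Sum.inl i) (Sum.inr j0) (1 : K) with hF
      set G : Matrix (Fin l ⊕ Fin l) (Fin l ⊕ Fin l) K := single (Sum.inr i) (Sum.inl j0) (1 : K) with hG
      have s1 : (1 + (A - B)) * (1 - (C - D)) * (1 + (A - B)) =
          1 - P - Q + A + D - C - B - P' - Q' := by
        simp only [hA, hB, hC, hD, hP, hQ, hR, hT, hP', hQ', hF, hG]
        simp only [add_mul, sub_mul, mul_sub, mul_add, one_mul, mul_one,
          single_mul_single_same, single_mul_single_of_ne, ne_eq, reduceCtorEq,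
          zero_mul, mul_zero, add_zero, zero_add, sub_zero, zero_sub,
          neg_mul, mul_neg, neg_zero, neg_neg,
          not_false_eq_true, Sum.inl.injEq, Sum.inr.injEq, hij, hji]
        abel
      have s2 : (1 - P - Q + A + D - C - B - P' - Q') * wl =
          1 - P - Q - F - G - C - B - P' - Q' := by
        simp only [hwl, hA, hB, hC, hD, hP, hQ, hR, hT, hP', hQ', hF, hG]
        simp only [add_mul, sub_mul, mul_sub, mul_add, one_mul, mul_one,
          single_mul_single_same, single_mul_single_of_ne, ne_eq, reduceCtorEq,
          zero_mul, mul_zero, add_zero, zero_add, sub_zero, zero_sub,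
          neg_mul, mul_neg, neg_zero, neg_neg,
          not_false_eq_true, Sum.inl.injEq, Sum.inr.injEq, hij, hji]
        abel
      have s3 : (1 - P - Q - F - G - C - B - P' - Q') * (1 - (A - B)) =
          1 - P - R - Q - F - G - C - B - Q' := by
        simp only [hwl, hA, hB, hC, hD, hP, hQ, hR, hT, hP', hQ', hF, hG]
        simp only [add_mul, sub_mul, mul_sub, mul_add, one_mul, mul_one,
          single_mul_single_same, single_mul_single_of_ne, ne_eq, reduceCtorEq,
          zero_mul, mul_zero, add_zero, zero_add, sub_zero, zero_sub,
          neg_mul, mul_neg, neg_zero, neg_neg,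
          not_false_eq_true, Sum.inl.injEq, Sum.inr.injEq, hij, hji]
        abel
      have s4 : (1 - P - R - Q - F - G - C - B - Q') * (1 + (C - D)) =
          1 - P - R - T - Q - G - B := by
        simp only [hA, hB, hC, hD, hP, hQ, hR, hT, hP', hQ', hF, hG]
        simp only [add_mul, sub_mul, mul_sub, mul_add, one_mul, mul_one,
          single_mul_single_same, single_mul_single_of_ne, ne_eq, reduceCtorEq,
          zero_mul, mul_zero, add_zero, zero_add, sub_zero, zero_sub,
          neg_mul, mul_neg, neg_zero, neg_neg,
          not_false_eq_true, Sum.inl.injEq, Sum.inr.injEq, hij, hji]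
        abel
      have s5 : (1 - P - R - T - Q - G - B) * (1 - (A - B)) =
          1 - P - Q - R - T := by
        simp only [hA, hB, hC, hD, hP, hQ, hR, hT, hP', hQ', hF, hG]
        simp only [add_mul, sub_mul, mul_sub, mul_add, one_mul, mul_one,
          single_mul_single_same, single_mul_single_of_ne, ne_eq, reduceCtorEq,
          zero_mul, mul_zero, add_zero, zero_add, sub_zero, zero_sub,
          neg_mul, mul_neg, neg_zero, neg_neg,
          not_false_eq_true, Sum.inl.injEq, Sum.inr.injEq, hij, hji]
        abel
      rw [s1, s2, s3, s4, s5]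
  · -- orthogonality
    rw [hwi, hβ]
    simp only [transpose_sub, transpose_one, transpose_E]
    simp only [sub_mul, mul_sub, one_mul, mul_one,
      E_mul_beta_inl, E_mul_beta_inr, beta_mul_E_inl, beta_mul_E_inr,
      single_mul_single_same, single_mul_single_of_ne, ne_eq, reduceCtorEq,
          zero_mul, mul_zero, add_zero, zero_add, sub_zero, zero_sub,
          neg_mul, mul_neg, neg_zero, neg_neg,
      not_false_eq_true]
    abel
  · -- rows
    intro g
    rw [hwi]
    constructor <;> intro j
    · have h1 : (Sum.inr i : Fin l ⊕ Fin l) ≠ Sum.inl i := by simp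
      simp only [sub_mul, one_mul, Matrix.sub_apply,
        single_mul_apply_same, one_mul,
        single_mul_apply_of_ne (M := g) (h := (by simp : (Sum.inl i : Fin l ⊕ Fin l) ≠ Sum.inr i))]
      ring
    · simp only [sub_mul, one_mul, Matrix.sub_apply,
        single_mul_apply_same, one_mul,
        single_mul_apply_of_ne (M := g) (h := (by simp : (Sum.inr i : Fin l ⊕ Fin l) ≠ Sum.inl i))]
      ring
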